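/- For every k ≥ 1 with n = k^3, and every V ⊆ [n]^2 with |V| ≤ n, there exists a finite family Q of axis-parallel rectangles with integer corners covering all points of [n]^2, such that no rectangle of Q contains a point of V in its interior, and the sum over Q ∈ Q of z(Q) is at most 4·n^{5/3}, where z(Q) is the maximum number of integer points that fit in Q without four of them forming the corners of an axis-parallel rectangle. -/

import Mathlib

/-- `F` contains no four corners of an axis-parallel rectangle. -/
def RectFree (F : Finset (ℤ × ℤ)) : Prop :=
  ¬ ∃ r₁ r₂ c₁ c₂ : ℤ, r₁ ≠ r₂ ∧ c₁ ≠ c₂ ∧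
    (r₁, c₁) ∈ F ∧ (r₁, c₂) ∈ F ∧ (r₂, c₁) ∈ F ∧ (r₂, c₂) ∈ F

/-- The point `p` lies in the (closed) rectangle `R`, encoded as a pair of opposite
corners `R = ((a₁, a₂), (b₁, b₂))`. -/
def MemRect (p : ℤ × ℤ) (R : (ℤ × ℤ) × (ℤ × ℤ)) : Prop :=
  R.1.1 ≤ p.1 ∧ p.1 ≤ R.2.1 ∧ R.1.2 ≤ p.2 ∧ p.2 ≤ R.2.2

/-- `zWeight R` is the maximum number of integer points that fit in the rectangle `R`
without four of them forming the corners of an axis-parallel rectangle. -/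
noncomputable def zWeight (R : (ℤ × ℤ) × (ℤ × ℤ)) : ℕ :=
  sSup {m : ℕ | ∃ F : Finset (ℤ × ℤ), (∀ p ∈ F, MemRect p R) ∧ RectFree F ∧ F.card = m}

open Finset in
lemma rectFree_card_le (F : Finset (ℤ×ℤ)) (hF : RectFree F) (a₁ b₁ a₂ b₂ : ℤ)
    (h : ∀ p ∈ F, a₁ ≤ p.1 ∧ p.1 ≤ b₁ ∧ a₂ ≤ p.2 ∧ p.2 ≤ b₂) :
    F.card ≤ (Icc a₂ b₂).card + (Icc a₁ b₁).card ^ 2 := by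
  classical
  set m : ℤ → ℤ := fun c => sInf {r : ℤ | (r, c) ∈ F} with hm
  have hne : ∀ p ∈ F, ({r : ℤ | (r, p.2) ∈ F} : Set ℤ).Nonempty := fun p hp => ⟨p.1, hp⟩
  have hbdd : ∀ c : ℤ, BddBelow {r : ℤ | (r, c) ∈ F} :=
    fun c => ⟨a₁, fun r hr => (h _ hr).1⟩
  have hmmem : ∀ p ∈ F, (m p.2, p.2) ∈ F := by
    intro p hp
    exact Int.csInf_mem (hne p hp) (hbdd p.2)
  have hmle : ∀ p ∈ F, m p.2 ≤ p.1 := by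
    intro p hp
    exact csInf_le (hbdd p.2) hp
  have hmge : ∀ p ∈ F, a₁ ≤ m p.2 := by
    intro p hp
    exact le_csInf (hne p hp) (fun r hr => (h _ hr).1)
  set φ : ℤ×ℤ → ℤ ⊕ (ℤ×ℤ) := fun p => if p.1 = m p.2 then Sum.inl p.2 else Sum.inr (m p.2, p.1)
    with hφ
  set T : Finset (ℤ ⊕ (ℤ×ℤ)) :=
    (Icc a₂ b₂).image Sum.inl ∪ ((Icc a₁ b₁ ×ˢ Icc a₁ b₁).image Sum.inr) with hT
  have hcard : F.card ≤ T.card := by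
    apply Finset.card_le_card_of_injOn φ
    · intro p hp
      simp only [hφ]
      split
      · apply Finset.mem_union_left
        exact Finset.mem_image_of_mem _ (by
          simp only [Finset.mem_Icc]; exact ⟨(h p hp).2.2.1, (h p hp).2.2.2⟩)
      · apply Finset.mem_union_right
        apply Finset.mem_image_of_mem
        simp only [Finset.mem_product, Finset.mem_Icc]
        exact ⟨⟨hmge p hp, le_trans (hmle p hp) (h p hp).2.1⟩, ⟨(h p hp).1, (h p hp).2.1⟩⟩
    · intro p hp q hq hpq
      simp only [hφ] at hpq
      by_cases h1 : p.1 = m p.2 <;> by_cases h2 : q.1 = m q.2 <;>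
        simp only [h1, h2, if_pos, if_neg, if_true, if_false] at hpq
      · have hc : p.2 = q.2 := Sum.inl.inj hpq
        exact Prod.ext (by rw [h1, h2, hc]) hc
      · exact absurd hpq (by simp)
      · exact absurd hpq (by simp)
      · have h3 := Sum.inr.inj hpq
        have hr : p.1 = q.1 := congrArg Prod.snd h3
        have hmeq : m p.2 = m q.2 := congrArg Prod.fst h3
        by_cases hc : p.2 = q.2
        · exact Prod.ext hr hc
        · exfalso
          apply hF
          refine ⟨m p.2, p.1, p.2, q.2, fun hcon => h1 hcon.symm, hc, hmmem p hp, ?_, ?_, ?_⟩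
          · rw [hmeq]; exact hmmem q hq
          · exact (Prod.mk.eta (p := p)) ▸ hp
          · rw [hr]; exact (Prod.mk.eta (p := q)) ▸ hq
  calc F.card ≤ T.card := hcard
    _ ≤ ((Icc a₂ b₂).image Sum.inl).card + ((Icc a₁ b₁ ×ˢ Icc a₁ b₁).image Sum.inr).card :=
        Finset.card_union_le _ _
    _ ≤ (Icc a₂ b₂).card + (Icc a₁ b₁).card ^ 2 := by
        gcongr
        · exact Finset.card_image_le
        · calc ((Icc a₁ b₁ ×ˢ Icc a₁ b₁).image Sum.inr).card ≤ (Icc a₁ b₁ ×ˢ Icc a₁ b₁).card :=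
              Finset.card_image_le
            _ = (Icc a₁ b₁).card ^ 2 := by rw [Finset.card_product, sq]

lemma zWeight_le (a₁ a₂ b₁ b₂ : ℤ) :
    zWeight ((a₁, a₂), (b₁, b₂)) ≤ (Finset.Icc a₂ b₂).card + (Finset.Icc a₁ b₁).card ^ 2 := by
  apply csSup_le'
  rintro n ⟨F, hmem, hfree, rfl⟩
  exact rectFree_card_le F hfree a₁ b₁ a₂ b₂ (fun p hp => hmem p hp)

lemma sum_biUnion_le {α β : Type*} [DecidableEq α] [DecidableEq β]
    (s : Finset α) (t : α → Finset β) (f : β → ℕ) :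
    ∑ x ∈ s.biUnion t, f x ≤ ∑ a ∈ s, ∑ x ∈ t a, f x := by
  induction s using Finset.induction_on with
  | empty => simp
  | insert _ _ h ih =>
    rename_i a s'
    rw [Finset.biUnion_insert, Finset.sum_insert h]
    calc ∑ x ∈ t a ∪ s'.biUnion t, f x ≤ ∑ x ∈ t a, f x + ∑ x ∈ s'.biUnion t, f x := by
          rw [← Finset.sum_union_inter]; exact Nat.le_add_right _ _
      _ ≤ _ := by exact Nat.add_le_add_left ih _

lemma block_idx (K M x : ℤ) (hK : 0 < K) (h1 : 1 ≤ x) (h2 : x ≤ K * M) :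
    ∃ i : ℕ, (i : ℤ) < M ∧ (i : ℤ) * K + 1 ≤ x ∧ x ≤ ((i : ℤ) + 1) * K := by
  refine ⟨((x - 1) / K).toNat, ?_, ?_, ?_⟩
  · rw [Int.toNat_of_nonneg (Int.ediv_nonneg (by omega) hK.le)]
    rw [Int.ediv_lt_iff_lt_mul hK]
    nlinarith
  · rw [Int.toNat_of_nonneg (Int.ediv_nonneg (by omega) hK.le)]
    have := Int.ediv_mul_le (x - 1) hK.ne'
    omega
  · rw [Int.toNat_of_nonneg (Int.ediv_nonneg (by omega) hK.le)]
    have := Int.lt_ediv_add_one_mul_self (x - 1) hK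
    omega

/-- The points of `V` strictly inside block `(i, j)`. -/
def blockPts (k : ℕ) (V : Finset (ℤ × ℤ)) (i j : ℕ) : Finset (ℤ × ℤ) :=
  V.filter (fun v => (i:ℤ)*k+1 < v.1 ∧ v.1 < ((i:ℤ)+1)*k ∧
    (j:ℤ)*k^2 < v.2 ∧ v.2 < ((j:ℤ)+1)*k^2)

def cuts (k : ℕ) (V : Finset (ℤ × ℤ)) (i j : ℕ) : Finset ℤ :=
  insert ((j:ℤ)*k^2) (insert (((j:ℤ)+1)*k^2) ((blockPts k V i j).image Prod.snd))

def pieces (k : ℕ) (V : Finset (ℤ × ℤ)) (i j : ℕ) : Finset ((ℤ × ℤ) × (ℤ × ℤ)) :=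
  ((cuts k V i j ×ˢ cuts k V i j).filter
    (fun cc => cc.1 < cc.2 ∧ ∀ c ∈ cuts k V i j, ¬(cc.1 < c ∧ c < cc.2))).image
    (fun cc => (((i:ℤ)*k+1, cc.1 + 1), (((i:ℤ)+1)*k, cc.2)))

lemma cuts_bounds (k : ℕ) (V : Finset (ℤ × ℤ)) (i j : ℕ) :
    ∀ c ∈ cuts k V i j, (j:ℤ)*k^2 ≤ c ∧ c ≤ ((j:ℤ)+1)*k^2 := by
  intro c hc
  have hk2 : (0:ℤ) ≤ (k:ℤ)^2 := by positivity
  simp only [cuts, Finset.mem_insert, Finset.mem_image] at hc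
  rcases hc with rfl | rfl | ⟨v, hv, rfl⟩
  · constructor <;> nlinarith
  · constructor <;> nlinarith
  · simp only [blockPts, Finset.mem_filter] at hv
    exact ⟨hv.2.2.2.1.le, hv.2.2.2.2.le⟩

lemma pieces_card (k : ℕ) (V : Finset (ℤ × ℤ)) (i j : ℕ) :
    (pieces k V i j).card ≤ (blockPts k V i j).card + 1 := by
  classical
  have h1 : (pieces k V i j).card ≤
      (((cuts k V i j ×ˢ cuts k V i j).filter
        (fun cc => cc.1 < cc.2 ∧ ∀ c ∈ cuts k V i j, ¬(cc.1 < c ∧ c < cc.2)))).card :=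
    Finset.card_image_le
  have h2 : (((cuts k V i j ×ˢ cuts k V i j).filter
        (fun cc => cc.1 < cc.2 ∧ ∀ c ∈ cuts k V i j, ¬(cc.1 < c ∧ c < cc.2)))).card ≤
      (insert ((j:ℤ)*k^2) ((blockPts k V i j).image Prod.snd)).card := by
    apply Finset.card_le_card_of_injOn Prod.fst
    · intro cc hcc
      simp only [Finset.mem_coe, Finset.mem_filter, Finset.mem_product] at hcc
      obtain ⟨⟨hc1, hc2⟩, hlt, _⟩ := hcc
      have hb2 := cuts_bounds k V i j cc.2 hc2
      have hne : cc.1 ≠ ((j:ℤ)+1)*k^2 := by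
        intro h; have := hb2.2; omega
      have := hc1
      simp only [cuts, Finset.mem_insert] at this
      rcases this with h | h | h
      · exact Finset.mem_insert.2 (Or.inl h)
      · exact absurd h hne
      · exact Finset.mem_insert.2 (Or.inr h)
    · intro cc hcc dd hdd heq
      simp only [Finset.coe_filter, Set.mem_setOf_eq, Finset.mem_product] at hcc hdd
      obtain ⟨⟨hc1, hc2⟩, hclt, hcbet⟩ := hcc
      obtain ⟨⟨hd1, hd2⟩, hdlt, hdbet⟩ := hdd
      have h22 : cc.2 = dd.2 := by
        by_contra hne
        rcases lt_or_gt_of_ne hne with h | h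
        · exact hdbet cc.2 hc2 ⟨heq ▸ hclt, h⟩
        · exact hcbet dd.2 hd2 ⟨heq.symm ▸ hdlt, h⟩
      exact Prod.ext heq h22
  calc (pieces k V i j).card ≤ _ := h1
    _ ≤ _ := h2
    _ ≤ ((blockPts k V i j).image Prod.snd).card + 1 := Finset.card_insert_le _ _
    _ ≤ (blockPts k V i j).card + 1 := by
        exact Nat.add_le_add_right Finset.card_image_le 1

lemma pieces_cover (k : ℕ) (V : Finset (ℤ × ℤ)) (i j : ℕ) (p : ℤ × ℤ)
    (h1 : (i:ℤ)*k+1 ≤ p.1) (h2 : p.1 ≤ ((i:ℤ)+1)*k)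
    (h3 : (j:ℤ)*k^2+1 ≤ p.2) (h4 : p.2 ≤ ((j:ℤ)+1)*k^2) :
    ∃ R ∈ pieces k V i j, MemRect p R := by
  classical
  set C := cuts k V i j with hC
  have htop : ((j:ℤ)+1)*k^2 ∈ C := by simp [hC, cuts]
  have hbot : (j:ℤ)*k^2 ∈ C := by simp [hC, cuts]
  set T := C.filter (fun c => p.2 ≤ c) with hT
  have hTne : T.Nonempty := ⟨((j:ℤ)+1)*k^2, Finset.mem_filter.2 ⟨htop, h4⟩⟩
  set c₂ := T.min' hTne with hc₂
  have hc₂C : c₂ ∈ C := (Finset.mem_filter.1 (T.min'_mem hTne)).1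
  have hc₂ge : p.2 ≤ c₂ := (Finset.mem_filter.1 (T.min'_mem hTne)).2
  set B := C.filter (fun c => c < c₂) with hB
  have hBne : B.Nonempty := by
    refine ⟨(j:ℤ)*k^2, Finset.mem_filter.2 ⟨hbot, ?_⟩⟩
    omega
  set c₁ := B.max' hBne with hc₁
  have hc₁C : c₁ ∈ C := (Finset.mem_filter.1 (B.max'_mem hBne)).1
  have hc₁lt : c₁ < c₂ := (Finset.mem_filter.1 (B.max'_mem hBne)).2
  have hc₁p : c₁ < p.2 := by
    by_contra h
    push_neg at h
    have : c₁ ∈ T := Finset.mem_filter.2 ⟨hc₁C, h⟩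
    have := T.min'_le c₁ this
    omega
  have hbetween : ∀ c ∈ C, ¬(c₁ < c ∧ c < c₂) := by
    rintro c hc ⟨ha, hb⟩
    have : c ∈ B := Finset.mem_filter.2 ⟨hc, hb⟩
    have := B.le_max' c this
    omega
  refine ⟨(((i:ℤ)*k+1, c₁ + 1), (((i:ℤ)+1)*k, c₂)), ?_, ?_⟩
  · simp only [pieces, Finset.mem_image]
    exact ⟨(c₁, c₂), Finset.mem_filter.2
      ⟨Finset.mem_product.2 ⟨hc₁C, hc₂C⟩, hc₁lt, hbetween⟩, rfl⟩
  · refine ⟨h1, h2, ?_, hc₂ge⟩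
    show c₁ + 1 ≤ p.2
    omega

lemma pieces_avoid (k : ℕ) (V : Finset (ℤ × ℤ)) (i j : ℕ) (R : (ℤ × ℤ) × (ℤ × ℤ))
    (hR : R ∈ pieces k V i j) (v : ℤ × ℤ) (hv : v ∈ V) :
    ¬ (R.1.1 < v.1 ∧ v.1 < R.2.1 ∧ R.1.2 < v.2 ∧ v.2 < R.2.2) := by
  classical
  simp only [pieces, Finset.mem_image] at hR
  obtain ⟨cc, hcc, rfl⟩ := hR
  simp only [Finset.mem_filter, Finset.mem_product] at hcc
  obtain ⟨⟨hc1, hc2⟩, hlt, hbet⟩ := hcc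
  rintro ⟨ha, hb, hc, hd⟩
  simp only at ha hb hc hd
  have hb1 := cuts_bounds k V i j cc.1 hc1
  have hb2 := cuts_bounds k V i j cc.2 hc2
  have hvmem : v ∈ blockPts k V i j := by
    refine Finset.mem_filter.2 ⟨hv, ha, hb, ?_, ?_⟩ <;> omega
  have : v.2 ∈ cuts k V i j := by
    simp only [cuts, Finset.mem_insert, Finset.mem_image]
    exact Or.inr (Or.inr ⟨v, hvmem, rfl⟩)
  exact hbet v.2 this ⟨by omega, hd⟩

lemma pieces_weight (k : ℕ) (V : Finset (ℤ × ℤ)) (i j : ℕ) (R : (ℤ × ℤ) × (ℤ × ℤ))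
    (hR : R ∈ pieces k V i j) : zWeight R ≤ 2 * k ^ 2 := by
  classical
  simp only [pieces, Finset.mem_image] at hR
  obtain ⟨cc, hcc, rfl⟩ := hR
  simp only [Finset.mem_filter, Finset.mem_product] at hcc
  obtain ⟨⟨hc1, hc2⟩, hlt, _⟩ := hcc
  have hb1 := cuts_bounds k V i j cc.1 hc1
  have hb2 := cuts_bounds k V i j cc.2 hc2
  have h := zWeight_le ((i:ℤ)*k+1) (cc.1 + 1) (((i:ℤ)+1)*k) cc.2
  have hrow : (Finset.Icc ((i:ℤ)*k+1) (((i:ℤ)+1)*k)).card = k := by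
    rw [Int.card_Icc]
    have : ((i:ℤ)+1)*k + 1 - ((i:ℤ)*k+1) = (k:ℤ) := by ring
    rw [this, Int.toNat_natCast]
  have hcol : (Finset.Icc (cc.1 + 1) cc.2).card ≤ k ^ 2 := by
    rw [Int.card_Icc]
    rw [Int.toNat_le]
    push_cast
    have hkk : ((j:ℤ)+1)*(k:ℤ)^2 - (j:ℤ)*(k:ℤ)^2 = (k:ℤ)^2 := by ring
    omega
  calc zWeight (((i:ℤ)*k+1, cc.1 + 1), (((i:ℤ)+1)*k, cc.2)) ≤ _ := h
    _ ≤ k ^ 2 + k ^ 2 := by rw [hrow]; exact Nat.add_le_add_right hcol _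
    _ = 2 * k ^ 2 := by ring

theorem rect_cover_exists (k : ℕ) (hk : 1 ≤ k) (V : Finset (ℤ × ℤ))
    (hV : ∀ v ∈ V, 1 ≤ v.1 ∧ v.1 ≤ (k ^ 3 : ℤ) ∧ 1 ≤ v.2 ∧ v.2 ≤ (k ^ 3 : ℤ))
    (hVcard : V.card ≤ k ^ 3) :
    ∃ Q : Finset ((ℤ × ℤ) × (ℤ × ℤ)),
      (∀ p : ℤ × ℤ, (1 ≤ p.1 ∧ p.1 ≤ (k ^ 3 : ℤ) ∧ 1 ≤ p.2 ∧ p.2 ≤ (k ^ 3 : ℤ)) →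
        ∃ R ∈ Q, MemRect p R) ∧
      (∀ R ∈ Q, ∀ v ∈ V,
        ¬ (R.1.1 < v.1 ∧ v.1 < R.2.1 ∧ R.1.2 < v.2 ∧ v.2 < R.2.2)) ∧
      (∑ R ∈ Q, zWeight R) ≤ 4 * k ^ 5 := by
  classical
  have hk0 : (0:ℤ) < (k:ℤ) := by exact_mod_cast hk
  set I := Finset.range (k^2) ×ˢ Finset.range k with hI
  refine ⟨I.biUnion (fun ij => pieces k V ij.1 ij.2), ?_, ?_, ?_⟩
  · rintro p ⟨hp1, hp2, hp3, hp4⟩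
    obtain ⟨i, hiM, hi1, hi2⟩ := block_idx (k:ℤ) ((k:ℤ)^2) p.1 hk0 hp1
      (by have : (k:ℤ) * (k:ℤ)^2 = (k:ℤ)^3 := by ring
          rw [this]; exact_mod_cast hp2)
    obtain ⟨j, hjM, hj1, hj2⟩ := block_idx ((k:ℤ)^2) (k:ℤ) p.2 (by positivity) hp3
      (by have : (k:ℤ)^2 * (k:ℤ) = (k:ℤ)^3 := by ring
          rw [this]; exact_mod_cast hp4)
    obtain ⟨R, hR, hmem⟩ := pieces_cover k V i j p hi1 hi2 hj1 hj2
    refine ⟨R, Finset.mem_biUnion.2 ⟨(i,j), ?_, hR⟩, hmem⟩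
    simp only [hI, Finset.mem_product, Finset.mem_range]
    exact ⟨by exact_mod_cast hiM, by exact_mod_cast hjM⟩
  · intro R hR v hv
    obtain ⟨ij, _, hRij⟩ := Finset.mem_biUnion.1 hR
    exact pieces_avoid k V ij.1 ij.2 R hRij v hv
  · have hdisj : ∀ x ∈ I, ∀ y ∈ I, x ≠ y →
        Disjoint (blockPts k V x.1 x.2) (blockPts k V y.1 y.2) := by
      intro x _ y _ hxy
      rw [Finset.disjoint_left]
      intro v hvx hvy
      apply hxy
      simp only [blockPts, Finset.mem_filter] at hvx hvy
      obtain ⟨_, hx1, hx2, hx3, hx4⟩ := hvx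
      obtain ⟨_, hy1, hy2, hy3, hy4⟩ := hvy
      have hk2 : (0:ℤ) ≤ (k:ℤ) := hk0.le
      have hk22 : (0:ℤ) ≤ (k:ℤ)^2 := by positivity
      have e1 : (x.1:ℤ) < (y.1:ℤ) + 1 :=
        lt_of_mul_lt_mul_right (by omega : (x.1:ℤ)*k < ((y.1:ℤ)+1)*k) hk2
      have e2 : (y.1:ℤ) < (x.1:ℤ) + 1 :=
        lt_of_mul_lt_mul_right (by omega : (y.1:ℤ)*k < ((x.1:ℤ)+1)*k) hk2
      have e3 : (x.2:ℤ) < (y.2:ℤ) + 1 :=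
        lt_of_mul_lt_mul_right (by omega : (x.2:ℤ)*k^2 < ((y.2:ℤ)+1)*k^2) hk22
      have e4 : (y.2:ℤ) < (x.2:ℤ) + 1 :=
        lt_of_mul_lt_mul_right (by omega : (y.2:ℤ)*k^2 < ((x.2:ℤ)+1)*k^2) hk22
      have : x.1 = y.1 := by omega
      have : x.2 = y.2 := by omega
      exact Prod.ext ‹x.1 = y.1› ‹x.2 = y.2›
    have hsumV : ∑ ij ∈ I, (blockPts k V ij.1 ij.2).card ≤ k^3 := by
      calc ∑ ij ∈ I, (blockPts k V ij.1 ij.2).card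
          = (I.biUnion (fun ij => blockPts k V ij.1 ij.2)).card :=
            (Finset.card_biUnion hdisj).symm
        _ ≤ V.card := Finset.card_le_card (by
            intro v hv
            obtain ⟨ij, _, hvij⟩ := Finset.mem_biUnion.1 hv
            exact Finset.mem_filter.1 hvij |>.1)
        _ ≤ k^3 := hVcard
    have hIcard : I.card = k^3 := by
      simp only [hI, Finset.card_product, Finset.card_range]
      ring
    calc ∑ R ∈ I.biUnion (fun ij => pieces k V ij.1 ij.2), zWeight R
        ≤ ∑ ij ∈ I, ∑ R ∈ pieces k V ij.1 ij.2, zWeight R := sum_biUnion_le _ _ _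
      _ ≤ ∑ ij ∈ I, ((blockPts k V ij.1 ij.2).card + 1) * (2 * k^2) := by
          apply Finset.sum_le_sum
          intro ij _
          calc ∑ R ∈ pieces k V ij.1 ij.2, zWeight R
              ≤ (pieces k V ij.1 ij.2).card * (2*k^2) := by
                have := Finset.sum_le_card_nsmul (pieces k V ij.1 ij.2) zWeight (2*k^2)
                  (fun R hR => pieces_weight k V ij.1 ij.2 R hR)
                simpa [smul_eq_mul] using this
            _ ≤ _ := Nat.mul_le_mul_right _ (pieces_card k V ij.1 ij.2)
      _ = (∑ ij ∈ I, (blockPts k V ij.1 ij.2).card + I.card) * (2*k^2) := by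
          rw [← Finset.sum_mul, Finset.sum_add_distrib, Finset.sum_const, smul_eq_mul, mul_one]
      _ ≤ (k^3 + k^3) * (2*k^2) := by
          apply Nat.mul_le_mul_right
          rw [hIcard]
          exact Nat.add_le_add_right hsumV _
      _ = 4 * k^5 := by ring
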